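/- Let (X,τ,d) be an extended metric-topological space. Let U be the uniformity on X generated by the family of pseudometrics δ_f(x,y) := |f(x)−f(y)|, f ∈ LIP_{b,1}(X,τ,d) (i.e. the infimum over f ∈ LIP_{b,1}(X,τ,d) of the pullbacks along (x,y) ↦ (f(x),f(y)) of the standard uniformity of ℝ). If the uniform space (X,U) is complete, then the extended metric space (X,d) is complete, i.e. every d-Cauchy net in X converges with respect to d. -/

import Mathlib

open scoped ENNReal Uniformity Topology

universe u v w

/-- An extended pseudodistance on `X`. -/
structure IsExtPseudoDist {X : Type*} (d : X → X → ℝ≥0∞) : Prop where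
  refl : ∀ x, d x x = 0
  symm : ∀ x y, d x y = d y x
  triangle : ∀ x y z, d x y ≤ d x z + d z y

/-- An extended distance on `X`. -/
structure IsExtDist {X : Type*} (d : X → X → ℝ≥0∞) : Prop where
  eq_zero_iff : ∀ x y, d x y = 0 ↔ x = y
  symm : ∀ x y, d x y = d y x
  triangle : ∀ x y z, d x y ≤ d x z + d z y

/-- `LIP_{b,1}(X,τ,d)`: bounded `τ`-continuous functions `f : X → ℝ` with
`|f x - f y| ≤ d x y`. -/
def Lip1 {X : Type*} (τ : TopologicalSpace X) (d : X → X → ℝ≥0∞) : Set (X → ℝ) :=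
  {f | @Continuous X ℝ τ _ f ∧ (∃ C : ℝ, ∀ x, |f x| ≤ C) ∧
    ∀ x y, ENNReal.ofReal |f x - f y| ≤ d x y}

/-- `(X,τ,d)` is an extended metric-topological space. -/
def IsEMT {X : Type*} (τ : TopologicalSpace X) (d : X → X → ℝ≥0∞) : Prop :=
  IsExtDist d ∧
  τ = (⨅ f ∈ Lip1 τ d, TopologicalSpace.induced f inferInstance) ∧
  (∀ x y, d x y = ⨆ f ∈ Lip1 τ d, ENNReal.ofReal |f x - f y|)

/-- A continuous-short map between (pre-)extended (pseudo)metric-topological spaces. -/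
def ContinuousShort {X Y : Type*} (τX : TopologicalSpace X) (dX : X → X → ℝ≥0∞)
    (τY : TopologicalSpace Y) (dY : Y → Y → ℝ≥0∞) (φ : X → Y) : Prop :=
  @Continuous X Y τX τY φ ∧ ∀ x y, dY (φ x) (φ y) ≤ dX x y

/-- Let `(X,τ,d)` be an e.m.t. space, and let `U` be the uniformity generated by the
pseudometrics `δ_f(x,y) = |f x - f y|`, `f ∈ LIP_{b,1}(X,τ,d)` (the infimum over `f` of the
pullbacks of the standard uniformity of `ℝ`). If `(X,U)` is a complete uniform space, then
`(X,d)` is metrically complete: every `d`-Cauchy net converges with respect to `d`. -/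
theorem dComplete_of_uniformComplete {X : Type u} (τ : TopologicalSpace X)
    (d : X → X → ℝ≥0∞) (h : IsEMT τ d)
    (hcomp : @CompleteSpace X (⨅ f ∈ Lip1 τ d, UniformSpace.comap f inferInstance)) :
    ∀ (I : Type v) [Nonempty I] [Preorder I] [IsDirected I (· ≤ ·)] (x : I → X),
      (⨅ i₀ : I, ⨆ (i : I) (_ : i₀ ≤ i) (j : I) (_ : i₀ ≤ j), d (x i) (x j)) = 0 →
      ∃ l : X, (⨅ i₀ : I, ⨆ (i : I) (_ : i₀ ≤ i), d (x i) l) = 0 := by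
  obtain ⟨hd, hτ, hrec⟩ := h
  intro I _ _ _ x hC
  letI 𝔘 : UniformSpace X := ⨅ f ∈ Lip1 τ d, UniformSpace.comap f inferInstance
  haveI : CompleteSpace X := hcomp
  haveI : (Filter.atTop : Filter I).NeBot :=
    Filter.atTop_neBot_iff.mpr ⟨‹Nonempty I›, ‹IsDirected I (· ≤ ·)›⟩
  have key : ∀ ε : ℝ≥0∞, 0 < ε →
      ∃ i₀ : I, ∀ i j, i₀ ≤ i → i₀ ≤ j → d (x i) (x j) < ε := by
    intro ε hε
    have hlt : (⨅ i₀ : I, ⨆ (i : I) (_ : i₀ ≤ i) (j : I) (_ : i₀ ≤ j), d (x i) (x j)) < ε := by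
      rw [hC]; exact hε
    obtain ⟨i₀, hi₀⟩ := iInf_lt_iff.mp hlt
    refine ⟨i₀, fun i j hi hj => lt_of_le_of_lt ?_ hi₀⟩
    exact le_iSup₂_of_le i hi (le_iSup₂_of_le j hj le_rfl)
  -- uniform continuity of each f ∈ Lip1
  have hUC : ∀ f ∈ Lip1 τ d, @UniformContinuous X ℝ 𝔘 _ f := by
    intro f hf
    rw [UniformContinuous, Filter.tendsto_iff_comap]
    have : 𝓤 X = ⨅ f ∈ Lip1 τ d, Filter.comap (Prod.map f f) (𝓤 ℝ) := by
      simp only [𝔘, iInf_uniformity, uniformity_comap]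
    rw [this]
    exact iInf₂_le f hf
  -- the net is Cauchy for 𝔘
  have hFc : @Cauchy X 𝔘 (Filter.map x Filter.atTop) := by
    constructor
    · exact Filter.map_neBot
    · have huni : 𝓤 X = ⨅ f ∈ Lip1 τ d, Filter.comap (Prod.map f f) (𝓤 ℝ) := by
        simp only [𝔘, iInf_uniformity, uniformity_comap]
      rw [huni]
      refine le_iInf₂ fun f hf => ?_
      rw [← Filter.map_le_iff_le_comap, Filter.prod_map_map_eq, Filter.map_map]
      have : ∀ ε : ℝ, 0 < ε → ∀ᶠ p : I × I in Filter.atTop ×ˢ Filter.atTop,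
          dist (f (x p.1)) (f (x p.2)) < ε := by
        intro ε hε
        obtain ⟨i₀, hi₀⟩ := key (ENNReal.ofReal ε) (by simpa using hε)
        filter_upwards [Filter.prod_mem_prod (Filter.Ici_mem_atTop i₀)
          (Filter.Ici_mem_atTop i₀)] with p hp
        have hd' := hi₀ p.1 p.2 hp.1 hp.2
        have := lt_of_le_of_lt (hf.2.2 (x p.1) (x p.2)) hd'
        rw [ENNReal.ofReal_lt_ofReal_iff hε] at this
        rwa [Real.dist_eq]
      exact (Metric.uniformity_basis_dist.tendsto_right_iff).mpr fun ε hε => this ε hε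
  obtain ⟨l, hl⟩ := CompleteSpace.complete hFc
  have hf_tendsto : ∀ f ∈ Lip1 τ d,
      Filter.Tendsto (fun i => f (x i)) Filter.atTop (nhds (f l)) := by
    intro f hf
    have hc : @Continuous X ℝ 𝔘.toTopologicalSpace _ f := (hUC f hf).continuous
    exact (@Continuous.tendsto X ℝ 𝔘.toTopologicalSpace _ f hc l).comp hl
  refine ⟨l, ?_⟩
  refine le_antisymm ?_ zero_le
  refine ENNReal.le_of_forall_pos_le_add fun ε hε _ => ?_
  rw [zero_add]
  obtain ⟨i₀, hi₀⟩ := key (ENNReal.ofReal ε) (by simpa using hε)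
  refine le_trans (iInf_le _ i₀) (iSup₂_le fun i hi => ?_)
  rw [hrec]
  refine iSup₂_le fun f hf => ?_
  have habs : |f (x i) - f l| ≤ ε := by
    have htd : Filter.Tendsto (fun j => |f (x i) - f (x j)|) Filter.atTop
        (nhds |f (x i) - f l|) :=
      (Filter.Tendsto.sub tendsto_const_nhds (hf_tendsto f hf)).abs
    refine le_of_tendsto htd ?_
    filter_upwards [Filter.Ici_mem_atTop i₀] with j hj
    have hd' := hi₀ i j hi hj
    have := lt_of_le_of_lt (hf.2.2 (x i) (x j)) hd'
    rw [ENNReal.ofReal_lt_ofReal_iff (by exact_mod_cast hε)] at this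
    exact this.le
  calc ENNReal.ofReal |f (x i) - f l| ≤ ENNReal.ofReal ε := ENNReal.ofReal_le_ofReal habs
    _ = (ε : ℝ≥0∞) := ENNReal.ofReal_coe_nnreal
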